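/- Let S be an integral lattice of signature (n,1) (hyperbolic), and let ρ ∈ S ⊗ ℚ satisfy (ρ,ρ) < 0. Then for every real constant K > 0, the set { a ∈ S : 0 < (a,a) < K and −K/2 < (ρ,a) < 0 } is finite. -/

import Mathlib

/-- For an integral lattice of signature (n,1) (a hyperbolic lattice,
realized by an integral symmetric Gram matrix `M` whose real form has an orthogonal
basis with `n` positive and one negative square), and `ρ ∈ S ⊗ ℚ` with `(ρ,ρ) < 0`,
for every real `K > 0` the set `{a ∈ S : 0 < (a,a) < K and −K/2 < (ρ,a) < 0}`
is finite. -/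
theorem hyperbolic_lattice_bounded_root_set_finite
    (n : ℕ) (M : Matrix (Fin (n+1)) (Fin (n+1)) ℤ) (hsym : M.IsSymm)
    (hsig : ∃ e : Module.Basis (Fin (n+1)) ℝ (Fin (n+1) → ℝ),
      (∀ i j, i ≠ j → ∑ k, ∑ l, e i k * (M k l : ℝ) * e j l = 0) ∧
      (∀ i, i ≠ Fin.last n → 0 < ∑ k, ∑ l, e i k * (M k l : ℝ) * e i l) ∧
      (∑ k, ∑ l, e (Fin.last n) k * (M k l : ℝ) * e (Fin.last n) l) < 0)
    (ρ : Fin (n+1) → ℚ)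
    (hρ : (∑ k, ∑ l, ρ k * (M k l : ℚ) * ρ l) < 0)
    (K : ℝ) (hK : 0 < K) :
    {a : Fin (n+1) → ℤ |
      0 < (∑ k, ∑ l, a k * M k l * a l) ∧
      ((∑ k, ∑ l, a k * M k l * a l : ℤ) : ℝ) < K ∧
      -K/2 < ((∑ k, ∑ l, ρ k * (M k l : ℚ) * (a l : ℚ) : ℚ) : ℝ) ∧
      ((∑ k, ∑ l, ρ k * (M k l : ℚ) * (a l : ℚ) : ℚ) : ℝ) < 0}.Finite := by
  classical
  obtain ⟨e, horth, hpos, hneg⟩ := hsig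
  set A : Matrix (Fin (n+1)) (Fin (n+1)) ℝ := M.map (fun z => (z : ℝ)) with hA
  set Bl : (Fin (n+1) → ℝ) →ₗ[ℝ] (Fin (n+1) → ℝ) →ₗ[ℝ] ℝ := Matrix.toLinearMap₂' ℝ A
    with hBldef
  have hBl : ∀ x y : Fin (n+1) → ℝ, Bl x y = ∑ k, ∑ l, x k * (M k l : ℝ) * y l := by
    intro x y
    rw [hBldef, Matrix.toLinearMap₂'_apply]
    refine Finset.sum_congr rfl fun k _ => Finset.sum_congr rfl fun l _ => ?_
    simp only [hA, Matrix.map_apply, smul_eq_mul]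
    ring
  clear hBldef
  clear_value Bl A
  have hMs : ∀ k l, (M l k : ℝ) = (M k l : ℝ) := by
    intro k l; exact_mod_cast hsym.apply k l
  have hBsymm : ∀ x y, Bl x y = Bl y x := by
    intro x y
    rw [hBl, hBl, Finset.sum_comm]
    refine Finset.sum_congr rfl fun l _ => Finset.sum_congr rfl fun k _ => ?_
    rw [hMs k l]; ring
  -- the real version of ρ
  set ρ' : Fin (n+1) → ℝ := fun i => (ρ i : ℝ) with hρ'def
  have hρ'neg : Bl ρ' ρ' < 0 := by
    have h : ((∑ k, ∑ l, ρ k * (M k l : ℚ) * ρ l : ℚ) : ℝ) < 0 := by exact_mod_cast hρ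
    rw [hBl]
    push_cast at h
    exact h
  set R : ℝ := -(Bl ρ' ρ') with hRdef
  have hR : 0 < R := by simp [hRdef]; linarith
  clear_value R
  -- diagonal data
  set d : Fin (n+1) → ℝ := fun i => Bl (e i) (e i) with hddef
  have horth' : ∀ i j, i ≠ j → Bl (e i) (e j) = 0 := by
    intro i j hij; rw [hBl]; exact horth i j hij
  have hpos' : ∀ i, i ≠ Fin.last n → 0 < d i := by
    intro i hi; rw [hddef]; simpa [hBl] using hpos i hi
  have hneg' : d (Fin.last n) < 0 := by rw [hddef]; simpa [hBl] using hneg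
  clear_value d
  -- expansion in the basis e
  have hexp : ∀ x y, Bl x y = ∑ i, ∑ j, e.repr x i * e.repr y j * Bl (e i) (e j) := by
    intro x y
    conv_lhs => rw [← e.sum_repr x, ← e.sum_repr y]
    simp only [map_sum, map_smul, LinearMap.sum_apply, LinearMap.smul_apply, smul_eq_mul,
      Finset.mul_sum]
    rw [Finset.sum_comm]
    refine Finset.sum_congr rfl fun i _ => Finset.sum_congr rfl fun j _ => by ring
  have hdiag : ∀ x y, Bl x y = ∑ i, e.repr x i * e.repr y i * d i := by
    intro x y
    rw [hexp]
    refine Finset.sum_congr rfl fun i _ => ?_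
    simp only [hddef]
    exact Finset.sum_eq_single i (fun j _ hj => by rw [horth' i j (Ne.symm hj), mul_zero])
      (fun h => absurd (Finset.mem_univ i) h)
  -- the key positivity on the orthogonal complement of ρ'
  have key : ∀ w : Fin (n+1) → ℝ, Bl ρ' w = 0 → w ≠ 0 → 0 < Bl w w := by
    intro w hw hw0
    set L := Fin.last n with hL
    set p : Fin (n+1) → ℝ := fun i => e.repr ρ' i with hp
    set c : Fin (n+1) → ℝ := fun i => e.repr w i with hc
    have h1 : ∑ i, p i * c i * d i = 0 := by rw [← hdiag ρ' w]; exact hw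
    have h2 : ∑ i, p i * p i * d i < 0 := by rw [← hdiag ρ' ρ']; linarith
    set s : Finset (Fin (n+1)) := Finset.univ.erase L with hs
    have hsplit : ∀ f : Fin (n+1) → ℝ, ∑ i, f i = (∑ i ∈ s, f i) + f L := by
      intro f; rw [hs, Finset.sum_erase_add _ f (Finset.mem_univ L)]
    have hds : ∀ i ∈ s, 0 < d i := fun i hi => hpos' i (Finset.mem_erase.1 hi).1
    set P : ℝ := ∑ i ∈ s, p i ^ 2 * d i with hP
    set C : ℝ := ∑ i ∈ s, c i ^ 2 * d i with hC
    set X : ℝ := ∑ i ∈ s, p i * c i * d i with hX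
    have hP0 : 0 ≤ P := Finset.sum_nonneg fun i hi =>
      mul_nonneg (sq_nonneg _) (le_of_lt (hds i hi))
    have hC0 : 0 ≤ C := Finset.sum_nonneg fun i hi =>
      mul_nonneg (sq_nonneg _) (le_of_lt (hds i hi))
    have hCS : X ^ 2 ≤ P * C := by
      have := Finset.sum_mul_sq_le_sq_mul_sq s (fun i => p i * Real.sqrt (d i))
        (fun i => c i * Real.sqrt (d i))
      calc X ^ 2 = (∑ i ∈ s, (p i * Real.sqrt (d i)) * (c i * Real.sqrt (d i))) ^ 2 := by
            rw [hX]
            congr 1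
            refine Finset.sum_congr rfl fun i hi => ?_
            rw [mul_mul_mul_comm, Real.mul_self_sqrt (le_of_lt (hds i hi))]
        _ ≤ (∑ i ∈ s, (p i * Real.sqrt (d i)) ^ 2) * ∑ i ∈ s, (c i * Real.sqrt (d i)) ^ 2 :=
            this
        _ = P * C := by
            rw [hP, hC]
            congr 1 <;> refine Finset.sum_congr rfl fun i hi => ?_ <;>
              rw [mul_pow, Real.sq_sqrt (le_of_lt (hds i hi))]
    have h1' : X + p L * c L * d L = 0 := by rw [hX, ← hsplit]; exact h1
    have h2' : P + p L ^ 2 * d L < 0 := by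
      have hsp := hsplit (fun i => p i * p i * d i)
      rw [hsp] at h2
      have hPeq : P = ∑ i ∈ s, p i * p i * d i := by
        rw [hP]; exact Finset.sum_congr rfl fun i _ => by ring
      rw [hPeq, sq]; linarith
    rw [hdiag w w]
    have hgoal : (∑ i, e.repr w i * e.repr w i * d i) = C + c L ^ 2 * d L := by
      rw [hC, hsplit (fun i => c i * c i * d i)]
      simp only [← sq]
    rw [hgoal]
    by_contra hcon
    push_neg at hcon
    by_cases hcL : c L = 0
    · -- then all coordinates vanish, contradicting w ≠ 0
      have hCle : C ≤ 0 := by rw [hcL] at hcon; simpa using hcon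
      have hCzero : ∀ i ∈ s, c i ^ 2 * d i = 0 := by
        intro i hi
        have hterm : ∀ j ∈ s, 0 ≤ c j ^ 2 * d j := fun j hj =>
          mul_nonneg (sq_nonneg _) (le_of_lt (hds j hj))
        have := (Finset.sum_eq_zero_iff_of_nonneg hterm).1 (le_antisymm hCle hC0)
        exact this i hi
      have hczero : ∀ i, c i = 0 := by
        intro i
        by_cases hiL : i = L
        · rw [hiL]; exact hcL
        · have hi : i ∈ s := Finset.mem_erase.2 ⟨hiL, Finset.mem_univ i⟩
          have := hCzero i hi
          have hd := hds i hi
          have : c i ^ 2 = 0 := by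
            rcases mul_eq_zero.1 this with h | h
            · exact h
            · exact absurd h (ne_of_gt hd)
          exact sq_eq_zero_iff.1 this
      apply hw0
      have : e.repr w = 0 := by
        ext i; exact hczero i
      have := congrArg e.repr.symm this
      simpa using this
    · -- Cauchy–Schwarz contradiction
      have hcL2 : 0 < c L ^ 2 := by positivity
      have hdLneg : d L < 0 := hneg'
      have hXval : X = -(p L * c L * d L) := by linarith
      have hBB : 0 < c L ^ 2 * -d L := by
        apply mul_pos hcL2; linarith
      have hchain : X ^ 2 < (p L ^ 2 * -d L) * (c L ^ 2 * -d L) := by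
        calc X ^ 2 ≤ P * C := hCS
          _ ≤ P * (c L ^ 2 * -d L) := by
              apply mul_le_mul_of_nonneg_left _ hP0
              linarith
          _ < (p L ^ 2 * -d L) * (c L ^ 2 * -d L) := by
              apply mul_lt_mul_of_pos_right _ hBB
              linarith
      rw [hXval] at hchain
      have heq : (-(p L * c L * d L)) ^ 2 = (p L ^ 2 * -d L) * (c L ^ 2 * -d L) := by ring
      linarith
  -- the auxiliary positive definite form
  set Φ : (Fin (n+1) → ℝ) → ℝ := fun x => Bl x x + 2 * (Bl ρ' x) ^ 2 / R with hΦ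
  have hRne : R ≠ 0 := ne_of_gt hR
  clear_value Φ
  have hΦpos : ∀ x : Fin (n+1) → ℝ, x ≠ 0 → 0 < Φ x := by
    intro x hx
    set t : ℝ := -(Bl ρ' x) / R with ht
    set w : Fin (n+1) → ℝ := x - t • ρ' with hwdef
    have hrr : Bl ρ' ρ' = -R := by rw [hRdef]; ring
    have hw : Bl ρ' w = 0 := by
      rw [hwdef, map_sub, map_smul, smul_eq_mul, hrr, ht]
      field_simp; ring
    have hxw : x = w + t • ρ' := by rw [hwdef]; abel
    have hwρ : Bl w ρ' = 0 := by rw [hBsymm]; exact hw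
    have hρx : Bl ρ' x = -(t * R) := by rw [ht]; field_simp
    have hxx : Bl x x = Bl w w - t ^ 2 * R := by
      conv_lhs => rw [hxw]
      simp only [map_add, map_smul, LinearMap.add_apply, LinearMap.smul_apply, smul_eq_mul]
      rw [hw, hwρ, hrr]; ring
    have hΦx : Φ x = Bl w w + t ^ 2 * R := by
      simp only [hΦ]
      rw [hxx, hρx]
      field_simp
      ring
    rw [hΦx]
    by_cases hw0 : w = 0
    · have hteq : x = t • ρ' := by rw [hxw, hw0, zero_add]
      have ht0 : t ≠ 0 := fun h => hx (by rw [hteq, h, zero_smul])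
      have hww : Bl w w = 0 := by rw [hw0]; simp
      have ht2 : 0 < t ^ 2 := lt_of_le_of_ne (sq_nonneg t) (Ne.symm (pow_ne_zero 2 ht0))
      rw [hww]
      have := mul_pos ht2 hR
      linarith
    · have h1 := key w hw hw0
      have h2 : 0 ≤ t ^ 2 * R := mul_nonneg (sq_nonneg t) (le_of_lt hR)
      linarith
  -- Φ is continuous
  have hcont : Continuous Φ := by
    have h1 : Continuous fun x : Fin (n+1) → ℝ => Bl x x := by
      simp only [hBl]
      refine continuous_finset_sum _ fun k _ => continuous_finset_sum _ fun l _ => ?_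
      exact ((continuous_apply k).mul continuous_const).mul (continuous_apply l)
    have h2 : Continuous fun x : Fin (n+1) → ℝ => Bl ρ' x := by
      simp only [hBl]
      refine continuous_finset_sum _ fun k _ => continuous_finset_sum _ fun l _ => ?_
      exact continuous_const.mul (continuous_apply l)
    simp only [hΦ]
    exact h1.add ((continuous_const.mul (h2.pow 2)).div_const R)
  -- minimum of Φ on the unit sphere
  obtain ⟨z, hz, hzmin⟩ := (isCompact_sphere (0 : Fin (n+1) → ℝ) 1).exists_isMinOn
    (NormedSpace.sphere_nonempty.2 zero_le_one) hcont.continuousOn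
  have hzmin : ∀ y ∈ Metric.sphere (0 : Fin (n+1) → ℝ) 1, Φ z ≤ Φ y := fun y hy => hzmin hy
  have hz1 : ‖z‖ = 1 := by simpa using mem_sphere_zero_iff_norm.1 hz
  have hz0 : z ≠ 0 := by
    intro h; rw [h, norm_zero] at hz1; norm_num at hz1
  set m : ℝ := Φ z with hm
  have hm0 : 0 < m := hΦpos z hz0
  clear_value m
  -- homogeneity of Φ
  have hhom : ∀ (sc : ℝ) (x : Fin (n+1) → ℝ), Φ (sc • x) = sc ^ 2 * Φ x := by
    intro sc x
    have h1 : Bl (sc • x) (sc • x) = sc ^ 2 * Bl x x := by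
      simp only [map_smul, LinearMap.smul_apply, smul_eq_mul]; ring
    have h2 : Bl ρ' (sc • x) = sc * Bl ρ' x := by
      rw [map_smul]; simp only [smul_eq_mul]
    simp only [hΦ]
    rw [h1, h2]
    field_simp
  -- coercivity
  have hlow : ∀ x : Fin (n+1) → ℝ, m * ‖x‖ ^ 2 ≤ Φ x := by
    intro x
    by_cases hx0 : x = 0
    · rw [hx0]
      simp [hΦ]
    · have hnx : ‖x‖ ≠ 0 := norm_ne_zero_iff.2 hx0
      have hxu : x = ‖x‖ • (‖x‖⁻¹ • x) := by
        rw [smul_smul, mul_inv_cancel₀ hnx, one_smul]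
      have hu : ‖x‖⁻¹ • x ∈ Metric.sphere (0 : Fin (n+1) → ℝ) 1 := by
        rw [mem_sphere_zero_iff_norm, norm_smul, norm_inv, norm_norm, inv_mul_cancel₀ hnx]
      have hmu : m ≤ Φ (‖x‖⁻¹ • x) := hzmin _ hu
      calc m * ‖x‖ ^ 2 ≤ Φ (‖x‖⁻¹ • x) * ‖x‖ ^ 2 :=
            mul_le_mul_of_nonneg_right hmu (sq_nonneg _)
        _ = Φ x := by rw [mul_comm, ← hhom, ← hxu]
  -- bounding constants
  set Cb : ℝ := K + K ^ 2 / (2 * R) with hCb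
  have hCb0 : 0 < Cb := by
    have h1 : 0 ≤ K ^ 2 / (2 * R) := by positivity
    rw [hCb]; linarith
  clear_value Cb
  set Rad : ℝ := Real.sqrt (Cb / m) with hRad
  set N : ℤ := ⌈Rad⌉ with hN
  clear_value Rad N
  apply Set.Finite.subset (Set.Finite.pi fun _ : Fin (n+1) => Set.finite_Icc (-N) N)
  rintro a ⟨-, h2, h3, h4⟩
  set a' : Fin (n+1) → ℝ := fun i => (a i : ℝ) with ha'
  have hQa : Bl a' a' = ((∑ k, ∑ l, a k * M k l * a l : ℤ) : ℝ) := by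
    rw [hBl]; push_cast; rfl
  have hPa : Bl ρ' a' = ((∑ k, ∑ l, ρ k * (M k l : ℚ) * (a l : ℚ) : ℚ) : ℝ) := by
    rw [hBl]; push_cast; rfl
  rw [← hPa] at h3 h4
  have hq : (Bl ρ' a') ^ 2 < K ^ 2 / 4 := by
    have hv1 : -(K/2) < Bl ρ' a' := by linarith
    have hv2 : Bl ρ' a' < K/2 := by linarith
    have h := sq_lt_sq' hv1 hv2
    have h24 : (K/2) ^ 2 = K^2/4 := by ring
    linarith
  have hΦa : Φ a' < Cb := by
    have hdiv : 2 * (Bl ρ' a') ^ 2 / R < K ^ 2 / (2 * R) := by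
      rw [div_lt_div_iff₀ hR (by positivity)]
      have := mul_lt_mul_of_pos_right hq hR
      nlinarith [this]
    have hBaa : Bl a' a' < K := by rw [hQa]; exact h2
    simp only [hΦ, hCb]
    linarith
  have hna : ‖a'‖ ≤ Rad := by
    have hsq : ‖a'‖ ^ 2 ≤ Cb / m := by
      rw [le_div_iff₀ hm0]
      have := hlow a'
      linarith
    rw [hRad]
    have := Real.sqrt_le_sqrt hsq
    rwa [Real.sqrt_sq (norm_nonneg a')] at this
  refine Set.mem_pi.2 fun i _ => Set.mem_Icc.2 ?_
  have hai : |(a i : ℝ)| ≤ Rad := by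
    calc |(a i : ℝ)| = ‖a' i‖ := by rw [ha']; simp [Real.norm_eq_abs]
      _ ≤ ‖a'‖ := norm_le_pi_norm a' i
      _ ≤ Rad := hna
  have hRadN : Rad ≤ (N : ℝ) := by rw [hN]; exact Int.le_ceil Rad
  obtain ⟨hl, hr⟩ := abs_le.1 hai
  constructor
  · have : ((-N : ℤ) : ℝ) ≤ (a i : ℝ) := by push_cast; linarith
    exact_mod_cast this
  · have : ((a i : ℝ)) ≤ ((N : ℤ) : ℝ) := by push_cast; linarith
    exact_mod_cast this
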